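/- arXiv:2306.15524 — 2 statements merged into one kernel-verified Lean document; each statement's English description precedes it below -/
import Mathlib

section
/- Let π ∈ ℝⁿ, δ > 0, and take the cost c(u,w) = ‖u − w‖₂². Then inf over probability measures P on ℝⁿ with C(P,Q) ≤ δ of E_P[⟪π, R⟫] equals (1/N) Σ_{i=1}^N ⟪π, Rᵢ⟫ − √δ ‖π‖₂. (Every P with C(P,Q) ≤ δ has finite second moment, so the expectation is well-defined and finite.) -/
open MeasureTheory
open scoped ENNReal RealInnerProductSpace BigOperators

/-- The optimal transport cost between two measures on `ℝⁿ` with cost function `c`. -/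
noncomputable def transportCost {n : ℕ}
    (c : EuclideanSpace ℝ (Fin n) → EuclideanSpace ℝ (Fin n) → ℝ≥0∞)
    (μ ν : Measure (EuclideanSpace ℝ (Fin n))) : ℝ≥0∞ :=
  ⨅ (γ : Measure (EuclideanSpace ℝ (Fin n) × EuclideanSpace ℝ (Fin n)))
    (_ : γ.map Prod.fst = μ) (_ : γ.map Prod.snd = ν),
    ∫⁻ p, c p.1 p.2 ∂γ

/-- The empirical measure `Q = (1/N) ∑ᵢ δ_{Rᵢ}`. -/
noncomputable def empirical {n N : ℕ} (R : Fin N → EuclideanSpace ℝ (Fin n)) :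
    Measure (EuclideanSpace ℝ (Fin n)) :=
  (N : ℝ≥0∞)⁻¹ • ∑ i, Measure.dirac (R i)

section Aux

lemma map_smul_sum_dirac {α β : Type*} [MeasurableSpace α] [MeasurableSpace β]
    {N : ℕ} (x : Fin N → α) {f : α → β} (hf : Measurable f) (c : ℝ≥0∞) :
    ((c • ∑ i, Measure.dirac (x i)).map f) = c • ∑ i, Measure.dirac (f (x i)) := by
  rw [Measure.map_smul]
  congr 1
  rw [← Measure.mapₗ_apply_of_measurable hf, map_sum]
  refine Finset.sum_congr rfl fun i _ => ?_
  rw [Measure.mapₗ_apply_of_measurable hf, Measure.map_dirac' hf]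

lemma empirical_isProb {n N : ℕ} (hN : 0 < N) (x : Fin N → EuclideanSpace ℝ (Fin n)) :
    IsProbabilityMeasure (empirical x) := by
  constructor
  rw [empirical, Measure.smul_apply, Measure.finset_sum_apply]
  simp only [Measure.dirac_apply_of_mem (Set.mem_univ _), Finset.sum_const,
    Finset.card_univ, Fintype.card_fin, nsmul_eq_mul, mul_one, smul_eq_mul]
  exact ENNReal.inv_mul_cancel (Nat.cast_ne_zero.mpr hN.ne') (ENNReal.natCast_ne_top N)

lemma integral_empirical {n N : ℕ} (x : Fin N → EuclideanSpace ℝ (Fin n))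
    (f : EuclideanSpace ℝ (Fin n) → ℝ) (hf : StronglyMeasurable f) :
    ∫ y, f y ∂(empirical x) = (N : ℝ)⁻¹ * ∑ i, f (x i) := by
  have hint : ∀ i ∈ Finset.univ, Integrable f (Measure.dirac (x i)) := by
    intro i _
    refine ⟨hf.aestronglyMeasurable, ?_⟩
    rw [HasFiniteIntegral, lintegral_dirac' _ hf.measurable.enorm]
    exact ENNReal.coe_lt_top
  rw [empirical, integral_smul_measure, integral_finset_sum_measure hint]
  simp only [integral_dirac' _ _ hf, smul_eq_mul]
  simp [ENNReal.toReal_inv]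

lemma sqrt_add_le' {x y : ℝ} (hx : 0 ≤ x) (hy : 0 ≤ y) :
    Real.sqrt (x + y) ≤ Real.sqrt x + Real.sqrt y := by
  have h1 : x + y ≤ (Real.sqrt x + Real.sqrt y) ^ 2 := by
    have hx' := Real.sq_sqrt hx
    have hy' := Real.sq_sqrt hy
    have := Real.sqrt_nonneg x
    have := Real.sqrt_nonneg y
    nlinarith [mul_nonneg (Real.sqrt_nonneg x) (Real.sqrt_nonneg y)]
  calc Real.sqrt (x + y) ≤ Real.sqrt ((Real.sqrt x + Real.sqrt y) ^ 2) :=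
        Real.sqrt_le_sqrt h1
    _ = Real.sqrt x + Real.sqrt y :=
        Real.sqrt_sq (by positivity)

end Aux

/-- Feasible-region duality for `κ = 2` (from the proof of Proposition 4.1):
`inf_{P : C(P,Q) ≤ δ} E_P[⟪π, R⟫] = (1/N) ∑ᵢ ⟪π, Rᵢ⟫ − √δ ‖π‖₂`,
with the cost `c(u,w) = ‖u − w‖₂²`. -/
theorem worst_case_mean_k2 (n N : ℕ) (hN : 0 < N)
    (R : Fin N → EuclideanSpace ℝ (Fin n))
    (π : EuclideanSpace ℝ (Fin n)) (δ : ℝ) (hδ : 0 < δ) :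
    (⨅ (P : Measure (EuclideanSpace ℝ (Fin n)))
        (_ : IsProbabilityMeasure P)
        (_ : transportCost (fun u w => ENNReal.ofReal (‖u - w‖ ^ 2)) P (empirical R)
          ≤ ENNReal.ofReal δ),
        ((∫ x, ⟪π, x⟫ ∂P : ℝ) : EReal)) =
    (((N : ℝ)⁻¹ * ∑ i : Fin N, ⟪π, R i⟫ - Real.sqrt δ * ‖π‖ : ℝ) : EReal) := by
  have hNR : (0 : ℝ) < N := Nat.cast_pos.mpr hN
  have hinner_cont : Continuous fun x : EuclideanSpace ℝ (Fin n) => ⟪π, x⟫ :=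
    continuous_const.inner continuous_id
  have hinner_sm : StronglyMeasurable fun x : EuclideanSpace ℝ (Fin n) => ⟪π, x⟫ :=
    hinner_cont.stronglyMeasurable
  set mean : ℝ := (N : ℝ)⁻¹ * ∑ i : Fin N, ⟪π, R i⟫ with hmean
  refine le_antisymm ?_ ?_
  · -- upper bound : construct the shifted empirical measure
    set v : EuclideanSpace ℝ (Fin n) := (Real.sqrt δ / ‖π‖) • π with hv
    have hv_norm_sq : ‖v‖ ^ 2 ≤ δ := by
      rcases eq_or_ne π 0 with h | h
      · simp [hv, h, hδ.le]
      · have hπ : (0:ℝ) < ‖π‖ := norm_pos_iff.mpr h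
        rw [hv, norm_smul]
        rw [Real.norm_eq_abs, abs_of_nonneg (by positivity)]
        rw [div_mul_cancel₀ _ hπ.ne']
        rw [Real.sq_sqrt hδ.le]
    have hv_inner : ⟪π, v⟫ = Real.sqrt δ * ‖π‖ := by
      rcases eq_or_ne π 0 with h | h
      · simp [hv, h]
      · have hπ : (0:ℝ) < ‖π‖ := norm_pos_iff.mpr h
        rw [hv, real_inner_smul_right, real_inner_self_eq_norm_sq]
        field_simp
    set P₀ : Measure (EuclideanSpace ℝ (Fin n)) := empirical (fun i => R i - v) with hP₀
    have hP₀prob : IsProbabilityMeasure P₀ := empirical_isProb hN _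
    set γ₀ : Measure ((EuclideanSpace ℝ (Fin n)) × (EuclideanSpace ℝ (Fin n))) :=
      (N : ℝ≥0∞)⁻¹ • ∑ i, Measure.dirac ((R i - v, R i) : (EuclideanSpace ℝ (Fin n)) × (EuclideanSpace ℝ (Fin n))) with hγ₀
    have hfst : γ₀.map Prod.fst = P₀ := by
      rw [hγ₀, map_smul_sum_dirac _ measurable_fst]; rfl
    have hsnd : γ₀.map Prod.snd = empirical R := by
      rw [hγ₀, map_smul_sum_dirac _ measurable_snd]; rfl
    have hcost : transportCost (fun u w => ENNReal.ofReal (‖u - w‖ ^ 2)) P₀ (empirical R)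
        ≤ ENNReal.ofReal δ := by
      refine iInf_le_of_le γ₀ (iInf_le_of_le hfst (iInf_le_of_le hsnd ?_))
      have hm : Measurable fun p : (EuclideanSpace ℝ (Fin n)) × (EuclideanSpace ℝ (Fin n)) => ENNReal.ofReal (‖p.1 - p.2‖ ^ 2) :=
        (ENNReal.continuous_ofReal.comp
          ((continuous_fst.sub continuous_snd).norm.pow 2)).measurable
      rw [hγ₀, lintegral_smul_measure, lintegral_finset_sum_measure]
      simp only [lintegral_dirac' _ hm]
      have : ∀ i : Fin N, ENNReal.ofReal (‖(R i - v) - R i‖ ^ 2) = ENNReal.ofReal (‖v‖ ^ 2) := by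
        intro i; congr 1; rw [sub_sub_cancel_left, norm_neg]
      simp only [this, Finset.sum_const, Finset.card_univ, Fintype.card_fin, nsmul_eq_mul]
      rw [smul_eq_mul, ← mul_assoc, ENNReal.inv_mul_cancel (by exact_mod_cast hN.ne')
        (ENNReal.natCast_ne_top N), one_mul]
      exact ENNReal.ofReal_le_ofReal hv_norm_sq
    have hval : (∫ x, ⟪π, x⟫ ∂P₀ : ℝ) = mean - Real.sqrt δ * ‖π‖ := by
      rw [hP₀, integral_empirical _ _ hinner_sm]
      have : ∀ i : Fin N, ⟪π, R i - v⟫ = ⟪π, R i⟫ - Real.sqrt δ * ‖π‖ := by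
        intro i; rw [inner_sub_right, hv_inner]
      simp only [this, Finset.sum_sub_distrib, Finset.sum_const, Finset.card_univ,
        Fintype.card_fin, nsmul_eq_mul, mul_sub, hmean]
      rw [← mul_assoc, inv_mul_cancel₀ hNR.ne', one_mul]
    calc (⨅ (P : Measure (EuclideanSpace ℝ (Fin n))) (_ : IsProbabilityMeasure P)
          (_ : transportCost (fun u w => ENNReal.ofReal (‖u - w‖ ^ 2)) P (empirical R)
            ≤ ENNReal.ofReal δ), ((∫ x, ⟪π, x⟫ ∂P : ℝ) : EReal))
        ≤ ((∫ x, ⟪π, x⟫ ∂P₀ : ℝ) : EReal) :=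
          iInf_le_of_le P₀ (iInf_le_of_le hP₀prob (iInf_le_of_le hcost le_rfl))
      _ = ((mean - Real.sqrt δ * ‖π‖ : ℝ) : EReal) := by rw [hval]
  · -- lower bound
    refine le_iInf fun P => le_iInf fun hP => le_iInf fun hc => ?_
    rw [EReal.coe_le_coe_iff]
    refine le_of_forall_pos_le_add fun c hc0 => ?_
    set ε : ℝ := (c / (‖π‖ + 1)) ^ 2 with hε
    have hπ1 : (0:ℝ) < ‖π‖ + 1 := by positivity
    have hε0 : 0 < ε := by positivity
    -- extract a coupling with cost < δ + ε
    have hlt : transportCost (fun u w => ENNReal.ofReal (‖u - w‖ ^ 2)) P (empirical R)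
        < ENNReal.ofReal (δ + ε) := by
      refine lt_of_le_of_lt hc ?_
      exact ENNReal.ofReal_lt_ofReal_iff (by linarith) |>.mpr (by linarith)
    rw [transportCost, iInf_lt_iff] at hlt
    obtain ⟨γ, hlt⟩ := hlt
    rw [iInf_lt_iff] at hlt
    obtain ⟨hfst, hlt⟩ := hlt
    rw [iInf_lt_iff] at hlt
    obtain ⟨hsnd, hγc⟩ := hlt
    -- γ is a probability measure
    have hγprob : IsProbabilityMeasure γ := by
      constructor
      have : γ.map Prod.fst Set.univ = P Set.univ := by rw [hfst]
      rw [Measure.map_apply measurable_fst MeasurableSet.univ, Set.preimage_univ] at this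
      rw [this, measure_univ]
    -- a.e. bound on the second coordinate
    set M : ℝ := ∑ i : Fin N, ‖R i‖ with hM
    have hRM : ∀ i : Fin N, ‖R i‖ ≤ M := fun i =>
      Finset.single_le_sum (fun j _ => norm_nonneg (R j)) (Finset.mem_univ i)
    have hsetm : MeasurableSet {y : EuclideanSpace ℝ (Fin n) | ¬ ‖y‖ ≤ M} :=
      (isClosed_le continuous_norm continuous_const).measurableSet.compl
    have hae2 : ∀ᵐ p ∂γ, ‖(p : (EuclideanSpace ℝ (Fin n)) × (EuclideanSpace ℝ (Fin n))).2‖ ≤ M := by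
      rw [ae_iff]
      have : {p : (EuclideanSpace ℝ (Fin n)) × (EuclideanSpace ℝ (Fin n)) | ¬ ‖p.2‖ ≤ M} = Prod.snd ⁻¹' {y : EuclideanSpace ℝ (Fin n) | ¬ ‖y‖ ≤ M} := rfl
      rw [this, ← Measure.map_apply measurable_snd hsetm, hsnd, empirical,
        Measure.smul_apply, Measure.finset_sum_apply]
      have : ∀ i ∈ Finset.univ, Measure.dirac (R i) {y : EuclideanSpace ℝ (Fin n) | ¬ ‖y‖ ≤ M} = 0 := by
        intro i _
        rw [Measure.dirac_apply' _ hsetm]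
        simp [Set.indicator_of_notMem, hRM i]
      rw [Finset.sum_congr rfl this]
      simp
    -- the distance function and its properties
    set d : (EuclideanSpace ℝ (Fin n)) × (EuclideanSpace ℝ (Fin n)) → ℝ := fun p => ‖p.1 - p.2‖ with hd
    have hd_cont : Continuous d := (continuous_fst.sub continuous_snd).norm
    have hd_nonneg : ∀ p, 0 ≤ d p := fun p => norm_nonneg _
    have hd2m : Measurable fun p : (EuclideanSpace ℝ (Fin n)) × (EuclideanSpace ℝ (Fin n)) => ENNReal.ofReal (d p ^ 2) :=
      (ENNReal.continuous_ofReal.comp (hd_cont.pow 2)).measurable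
    have hγc' : ∫⁻ p, ENNReal.ofReal (d p ^ 2) ∂γ ≤ ENNReal.ofReal (δ + ε) := hγc.le
    have hd2int : Integrable (fun p => d p ^ 2) γ := by
      refine ⟨(hd_cont.pow 2).aestronglyMeasurable, ?_⟩
      rw [HasFiniteIntegral]
      have : ∀ p : (EuclideanSpace ℝ (Fin n)) × (EuclideanSpace ℝ (Fin n)), ‖d p ^ 2‖ₑ = ENNReal.ofReal (d p ^ 2) := fun p =>
        Real.enorm_eq_ofReal (by positivity)
      simp only [this]
      exact lt_of_le_of_lt hγc' ENNReal.ofReal_lt_top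
    have hd2val : ∫ p, d p ^ 2 ∂γ ≤ δ + ε := by
      rw [integral_eq_lintegral_of_nonneg_ae (f := fun p => d p ^ 2) (Filter.Eventually.of_forall fun p => sq_nonneg _)
        (hd_cont.pow 2).aestronglyMeasurable]
      exact ENNReal.toReal_le_of_le_ofReal (by linarith) hγc'
    have hdmem2 : MemLp d 2 γ := by
      refine (memLp_two_iff_integrable_sq hd_cont.aestronglyMeasurable).mpr ?_
      simpa [sq] using hd2int
    have hdint : Integrable d γ := hdmem2.integrable one_le_two
    -- Cauchy–Schwarz : ∫ d ≤ √(∫ d²)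
    have hCS : ∫ p, d p ∂γ ≤ Real.sqrt (∫ p, d p ^ 2 ∂γ) := by
      have hpq : Real.HolderConjugate 2 2 := Real.HolderConjugate.two_two
      have h1 : MemLp (fun _ : (EuclideanSpace ℝ (Fin n)) × (EuclideanSpace ℝ (Fin n)) => (1 : ℝ)) (ENNReal.ofReal 2) γ := by
        exact memLp_const 1
      have h2 : MemLp d (ENNReal.ofReal 2) γ := by
        convert hdmem2 using 2
        rw [ENNReal.ofReal_ofNat]
      have := integral_mul_le_Lp_mul_Lq_of_nonneg hpq
        (Filter.Eventually.of_forall hd_nonneg)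
        (Filter.Eventually.of_forall fun _ => zero_le_one) h2 h1
      have hrpow : ∀ p : (EuclideanSpace ℝ (Fin n)) × (EuclideanSpace ℝ (Fin n)),
          d p ^ (2:ℝ) = d p ^ 2 := fun p => by
        rw [show ((2:ℝ)) = ((2:ℕ):ℝ) by norm_num, Real.rpow_natCast]
      simp only [mul_one, Real.one_rpow, hrpow] at this
      rw [integral_const, Measure.real, measure_univ, ENNReal.toReal_one, one_smul, Real.one_rpow,
        mul_one] at this
      rw [Real.sqrt_eq_rpow]
      exact this
    have hintd_le : ∫ p, d p ∂γ ≤ Real.sqrt δ + Real.sqrt ε := by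
      refine hCS.trans ?_
      refine le_trans (Real.sqrt_le_sqrt hd2val) ?_
      exact sqrt_add_le' hδ.le hε0.le
    -- integrability of the inner products
    have hg2int : Integrable (fun p : (EuclideanSpace ℝ (Fin n)) × (EuclideanSpace ℝ (Fin n)) => ⟪π, p.2⟫) γ := by
      refine Integrable.mono' (integrable_const (‖π‖ * M))
        ((hinner_cont.comp continuous_snd).aestronglyMeasurable) ?_
      filter_upwards [hae2] with p hp
      rw [Real.norm_eq_abs]
      exact (abs_real_inner_le_norm π p.2).trans
        (mul_le_mul_of_nonneg_left hp (norm_nonneg π))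
    have hgdint : Integrable (fun p : (EuclideanSpace ℝ (Fin n)) × (EuclideanSpace ℝ (Fin n)) => ⟪π, p.1 - p.2⟫) γ := by
      refine Integrable.mono' (hdint.const_mul ‖π‖)
        ((hinner_cont.comp (continuous_fst.sub continuous_snd)).aestronglyMeasurable) ?_
      refine Filter.Eventually.of_forall fun p => ?_
      rw [Real.norm_eq_abs]
      exact abs_real_inner_le_norm π _
    have hsplit : (fun p : (EuclideanSpace ℝ (Fin n)) × (EuclideanSpace ℝ (Fin n)) => ⟪π, p.1⟫) =
        fun p => ⟪π, p.2⟫ + ⟪π, p.1 - p.2⟫ := by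
      funext p
      rw [← inner_add_right]
      congr 1
      abel
    have hg1int : Integrable (fun p : (EuclideanSpace ℝ (Fin n)) × (EuclideanSpace ℝ (Fin n)) => ⟪π, p.1⟫) γ := by
      rw [hsplit]; exact hg2int.add hgdint
    -- identify the two marginal integrals
    have hIP : ∫ x, ⟪π, x⟫ ∂P = ∫ p, ⟪π, (p : (EuclideanSpace ℝ (Fin n)) × (EuclideanSpace ℝ (Fin n))).1⟫ ∂γ := by
      rw [← hfst, integral_map measurable_fst.aemeasurable hinner_sm.aestronglyMeasurable]
    have hIQ : ∫ p, ⟪π, (p : (EuclideanSpace ℝ (Fin n)) × (EuclideanSpace ℝ (Fin n))).2⟫ ∂γ = mean := by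
      rw [← integral_map measurable_snd.aemeasurable hinner_sm.aestronglyMeasurable, hsnd,
        integral_empirical _ _ hinner_sm]
    have hkey : ∫ x, ⟪π, x⟫ ∂P = mean + ∫ p, ⟪π, (p : (EuclideanSpace ℝ (Fin n)) × (EuclideanSpace ℝ (Fin n))).1 - p.2⟫ ∂γ := by
      rw [hIP, hsplit, integral_add hg2int hgdint, hIQ]
    have habs : |∫ p, ⟪π, (p : (EuclideanSpace ℝ (Fin n)) × (EuclideanSpace ℝ (Fin n))).1 - p.2⟫ ∂γ| ≤ ‖π‖ * (Real.sqrt δ + Real.sqrt ε) := by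
      calc |∫ p, ⟪π, (p : (EuclideanSpace ℝ (Fin n)) × (EuclideanSpace ℝ (Fin n))).1 - p.2⟫ ∂γ| ≤ ∫ p, |⟪π, (p : (EuclideanSpace ℝ (Fin n)) × (EuclideanSpace ℝ (Fin n))).1 - p.2⟫| ∂γ := by
            simpa [Real.norm_eq_abs] using
              norm_integral_le_integral_norm (μ := γ)
                (fun p : (EuclideanSpace ℝ (Fin n)) × (EuclideanSpace ℝ (Fin n)) =>
                  ⟪π, p.1 - p.2⟫)
        _ ≤ ∫ p, ‖π‖ * d p ∂γ := by
            refine integral_mono hgdint.abs (hdint.const_mul ‖π‖) fun p => ?_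
            exact abs_real_inner_le_norm π _
        _ = ‖π‖ * ∫ p, d p ∂γ := integral_const_mul _ _
        _ ≤ ‖π‖ * (Real.sqrt δ + Real.sqrt ε) :=
            mul_le_mul_of_nonneg_left hintd_le (norm_nonneg π)
    have hsqε : ‖π‖ * Real.sqrt ε ≤ c := by
      rw [hε, Real.sqrt_sq (by positivity)]
      rw [mul_div_assoc']
      rw [div_le_iff₀ hπ1]
      nlinarith [norm_nonneg π, hc0.le]
    have : mean - (Real.sqrt δ * ‖π‖ + c) ≤ ∫ x, ⟪π, x⟫ ∂P := by
      rw [hkey]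
      have h1 : -(‖π‖ * (Real.sqrt δ + Real.sqrt ε)) ≤ ∫ p, ⟪π, (p : (EuclideanSpace ℝ (Fin n)) × (EuclideanSpace ℝ (Fin n))).1 - p.2⟫ ∂γ :=
        (abs_le.mp habs).1
      nlinarith [hsqε]
    linarith
end

section
/- Let π ∈ ℝⁿ, a ∈ ℝ, δ > 0, and take the cost c(u,w) = ‖u − w‖₂. Then sup over probability measures P on ℝⁿ with C(P,Q) ≤ δ of E_P[ max(−⟪π, R⟫ − a, 0) ] equals (1/N) Σ_{i=1}^N max(−⟪π, Rᵢ⟫ − a, 0) + δ‖π‖₂. -/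
open MeasureTheory
open scoped ENNReal RealInnerProductSpace BigOperators

private lemma map_finset_sum' {α β ι : Type*} [MeasurableSpace α] [MeasurableSpace β]
    (s : Finset ι) (μ : ι → Measure α) (f : α → β) (hf : Measurable f) :
    (∑ i ∈ s, μ i).map f = ∑ i ∈ s, (μ i).map f := by
  classical
  induction s using Finset.induction with
  | empty => simp
  | @insert a s h ih => rw [Finset.sum_insert h, Finset.sum_insert h, Measure.map_add _ _ hf, ih]


private lemma lintegral_empirical' {n N : ℕ} (hN : 0 < N) (R : Fin N → EuclideanSpace ℝ (Fin n))
    (π : EuclideanSpace ℝ (Fin n)) (a : ℝ) :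
    ∫⁻ x, ENNReal.ofReal (max (-⟪π, x⟫ - a) 0) ∂(empirical R)
      = ENNReal.ofReal ((N : ℝ)⁻¹ * ∑ i : Fin N, max (-⟪π, R i⟫ - a) 0) := by
  rw [empirical, lintegral_smul_measure, lintegral_finset_sum_measure]
  simp only [lintegral_dirac, smul_eq_mul]
  rw [ENNReal.ofReal_mul (by positivity),
    ENNReal.ofReal_sum_of_nonneg (fun i _ => le_max_right _ _),
    ENNReal.ofReal_inv_of_pos (by exact_mod_cast hN), ENNReal.ofReal_natCast]

private lemma lip' {n : ℕ} (π : EuclideanSpace ℝ (Fin n)) (a : ℝ) (u w : EuclideanSpace ℝ (Fin n)) :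
    max (-⟪π, u⟫ - a) 0 ≤ max (-⟪π, w⟫ - a) 0 + ‖π‖ * ‖u - w‖ := by
  have h1 : -⟪π, u⟫ - a = (-⟪π, w⟫ - a) + ⟪π, w - u⟫ := by rw [inner_sub_right]; ring
  have h2 : ⟪π, w - u⟫ ≤ ‖π‖ * ‖u - w‖ := by
    calc ⟪π, w - u⟫ ≤ ‖π‖ * ‖w - u‖ := real_inner_le_norm π (w - u)
    _ = ‖π‖ * ‖u - w‖ := by rw [norm_sub_rev]
  have h3 : max (-⟪π, w⟫ - a) 0 ≥ -⟪π, w⟫ - a := le_max_left _ _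
  have h4 : (0:ℝ) ≤ max (-⟪π, w⟫ - a) 0 := le_max_right _ _
  have h5 : (0:ℝ) ≤ ‖π‖ * ‖u - w‖ := by positivity
  apply max_le <;> linarith

private lemma upper' {n N : ℕ} (hN : 0 < N) (R : Fin N → EuclideanSpace ℝ (Fin n))
    (π : EuclideanSpace ℝ (Fin n)) (a δ : ℝ) (hδ : 0 ≤ δ)
    (P : Measure (EuclideanSpace ℝ (Fin n)))
    (hP : transportCost (fun u w => ENNReal.ofReal ‖u - w‖) P (empirical R) ≤ ENNReal.ofReal δ) :
    ∫⁻ x, ENNReal.ofReal (max (-⟪π, x⟫ - a) 0) ∂P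
      ≤ ENNReal.ofReal ((N : ℝ)⁻¹ * (∑ i : Fin N, max (-⟪π, R i⟫ - a) 0) + δ * ‖π‖) := by
  have hFmeas : Measurable (fun x : EuclideanSpace ℝ (Fin n) => ENNReal.ofReal (max (-⟪π, x⟫ - a) 0)) := by
    have : Continuous (fun x : EuclideanSpace ℝ (Fin n) => ⟪π, x⟫) :=
      continuous_const.inner continuous_id
    exact (ENNReal.continuous_ofReal.comp ((this.neg.sub continuous_const).max continuous_const)).measurable
  have hcmeas : Measurable (fun p : (EuclideanSpace ℝ (Fin n)) × (EuclideanSpace ℝ (Fin n)) => ENNReal.ofReal ‖p.1 - p.2‖) :=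
    (ENNReal.continuous_ofReal.comp ((continuous_fst.sub continuous_snd).norm)).measurable
  set k : ℝ≥0∞ := ENNReal.ofReal ‖π‖ with hk
  have hQv0 : 0 ≤ (N : ℝ)⁻¹ * (∑ i : Fin N, max (-⟪π, R i⟫ - a) 0) := by
    apply mul_nonneg (by positivity)
    exact Finset.sum_nonneg (fun i _ => le_max_right _ _)
  apply ENNReal.le_of_forall_pos_le_add
  intro ε hε _
  set ε' : ℝ≥0∞ := (ε : ℝ≥0∞) / (k + 1) with hε'
  have hε'pos : 0 < ε' := ENNReal.div_pos (by exact_mod_cast hε.ne') (by finiteness)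
  have hlt : transportCost (fun u w => ENNReal.ofReal ‖u - w‖) P (empirical R)
      < ENNReal.ofReal δ + ε' :=
    lt_of_le_of_lt hP (ENNReal.lt_add_right ENNReal.ofReal_ne_top hε'pos.ne')
  rw [transportCost] at hlt
  obtain ⟨γ, hγ⟩ := iInf_lt_iff.mp hlt
  obtain ⟨h1, hγ⟩ := iInf_lt_iff.mp hγ
  obtain ⟨h2, hcost⟩ := iInf_lt_iff.mp hγ
  calc ∫⁻ x, ENNReal.ofReal (max (-⟪π, x⟫ - a) 0) ∂P
      = ∫⁻ p, ENNReal.ofReal (max (-⟪π, p.1⟫ - a) 0) ∂γ := by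
        rw [← h1, lintegral_map hFmeas measurable_fst]
    _ ≤ ∫⁻ p, (ENNReal.ofReal (max (-⟪π, p.2⟫ - a) 0) + k * ENNReal.ofReal ‖p.1 - p.2‖) ∂γ := by
        apply lintegral_mono
        intro p
        calc ENNReal.ofReal (max (-⟪π, p.1⟫ - a) 0)
            ≤ ENNReal.ofReal (max (-⟪π, p.2⟫ - a) 0 + ‖π‖ * ‖p.1 - p.2‖) :=
              ENNReal.ofReal_le_ofReal (lip' π a p.1 p.2)
          _ = ENNReal.ofReal (max (-⟪π, p.2⟫ - a) 0) + k * ENNReal.ofReal ‖p.1 - p.2‖ := by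
              rw [ENNReal.ofReal_add (le_max_right _ _) (by positivity), ENNReal.ofReal_mul (norm_nonneg _)]
    _ = ∫⁻ p, ENNReal.ofReal (max (-⟪π, p.2⟫ - a) 0) ∂γ + k * ∫⁻ p, ENNReal.ofReal ‖p.1 - p.2‖ ∂γ := by
        have hmeas2 : Measurable fun p : (EuclideanSpace ℝ (Fin n)) × (EuclideanSpace ℝ (Fin n)) =>
            ENNReal.ofReal (max (-⟪π, p.2⟫ - a) 0) := hFmeas.comp measurable_snd
        rw [lintegral_add_left hmeas2, lintegral_const_mul k hcmeas]
    _ ≤ ENNReal.ofReal ((N : ℝ)⁻¹ * (∑ i : Fin N, max (-⟪π, R i⟫ - a) 0)) + k * (ENNReal.ofReal δ + ε') := by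
        apply add_le_add
        · rw [← lintegral_map hFmeas measurable_snd, h2, lintegral_empirical' hN]
        · exact mul_le_mul_right hcost.le k
    _ ≤ ENNReal.ofReal ((N : ℝ)⁻¹ * (∑ i : Fin N, max (-⟪π, R i⟫ - a) 0) + δ * ‖π‖) + ε := by
        rw [mul_add, ← add_assoc, ENNReal.ofReal_add hQv0 (by positivity)]
        apply add_le_add
        · apply add_le_add_right
          exact le_of_eq (by rw [hk, ← ENNReal.ofReal_mul (norm_nonneg π), mul_comm ‖π‖ δ])
        · calc k * ε' ≤ (k + 1) * ((ε : ℝ≥0∞) / (k + 1)) := mul_le_mul_left le_self_add _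
            _ = ε := ENNReal.mul_div_cancel (by simp) (by finiteness)

private lemma lower' {n N : ℕ} (hN : 0 < N) (R : Fin N → EuclideanSpace ℝ (Fin n))
    (π : EuclideanSpace ℝ (Fin n)) (a δ : ℝ) (hδ : 0 < δ) (ε : ℝ) (hε : 0 < ε) :
    ∃ P : Measure (EuclideanSpace ℝ (Fin n)), IsProbabilityMeasure P ∧
      transportCost (fun u w => ENNReal.ofReal ‖u - w‖) P (empirical R) ≤ ENNReal.ofReal δ ∧
      ENNReal.ofReal ((N : ℝ)⁻¹ * (∑ i : Fin N, max (-⟪π, R i⟫ - a) 0) + δ * ‖π‖ - ε)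
        ≤ ∫⁻ x, ENNReal.ofReal (max (-⟪π, x⟫ - a) 0) ∂P := by
  classical
  set i₀ : Fin N := ⟨0, hN⟩ with hi₀
  set g : ℝ := max (-⟪π, R i₀⟫ - a) 0 - (-⟪π, R i₀⟫ - a) with hg
  have hg0 : 0 ≤ g := by
    rw [hg, sub_nonneg]; exact le_max_left _ _
  have hNpos : (0:ℝ) < (N:ℝ)⁻¹ := by
    have : (0:ℝ) < (N:ℝ) := by exact_mod_cast hN
    positivity
  set τ : ℝ := min (N:ℝ)⁻¹ (ε / (g+1)) with hτ
  have hτ0 : 0 < τ := lt_min hNpos (by positivity)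
  have hτN : τ ≤ (N:ℝ)⁻¹ := min_le_left _ _
  have hτg : τ * g ≤ ε := by
    calc τ * g ≤ (ε/(g+1)) * g := mul_le_mul_of_nonneg_right (min_le_right _ _) hg0
    _ ≤ ε := by rw [div_mul_eq_mul_div, div_le_iff₀ (by linarith)]; nlinarith
  set u : EuclideanSpace ℝ (Fin n) := ‖π‖⁻¹ • π with hu
  have hun : ‖u‖ ≤ 1 := by
    rw [hu, norm_smul, norm_inv, norm_norm]
    rcases eq_or_ne (‖π‖) 0 with h|h
    · simp [h]
    · rw [inv_mul_cancel₀ h]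
  have hπu : ⟪π, u⟫ = ‖π‖ := by
    rw [hu, real_inner_smul_right, real_inner_self_eq_norm_mul_norm]
    rcases eq_or_ne (‖π‖) 0 with h|h
    · simp [h]
    · field_simp
  set y : EuclideanSpace ℝ (Fin n) := R i₀ - (δ/τ) • u with hy
  set t : ℝ≥0∞ := ENNReal.ofReal τ with ht
  have hNinv : ((N:ℝ≥0∞))⁻¹ = ENNReal.ofReal ((N:ℝ)⁻¹) := by
    rw [ENNReal.ofReal_inv_of_pos (by exact_mod_cast hN), ENNReal.ofReal_natCast]
  have htle : t ≤ (N : ℝ≥0∞)⁻¹ := by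
    rw [hNinv, ht]; exact ENNReal.ofReal_le_ofReal hτN
  set P : Measure (EuclideanSpace ℝ (Fin n)) :=
    ((N : ℝ≥0∞)⁻¹ - t) • Measure.dirac (R i₀) + t • Measure.dirac y
      + (N : ℝ≥0∞)⁻¹ • ∑ i ∈ Finset.univ.erase i₀, Measure.dirac (R i) with hP
  have h1N : (1:ℝ≥0∞) ≤ (N:ℝ≥0∞) := by exact_mod_cast hN
  have hcard : (Finset.univ.erase i₀).card = N - 1 := by
    rw [Finset.card_erase_of_mem (Finset.mem_univ _), Finset.card_univ, Fintype.card_fin]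
  have hprob : IsProbabilityMeasure P := by
    constructor
    have h1 : P Set.univ = ((N : ℝ≥0∞)⁻¹ - t) + t + (N : ℝ≥0∞)⁻¹ * ((N:ℕ) - 1 : ℕ) := by
      simp [hP, Measure.add_apply, Measure.smul_apply, Measure.finset_sum_apply, hcard]
    rw [h1, tsub_add_cancel_of_le htle, ENNReal.natCast_sub, Nat.cast_one]
    calc (N : ℝ≥0∞)⁻¹ + (N : ℝ≥0∞)⁻¹ * ((N:ℝ≥0∞) - 1)
        = (N : ℝ≥0∞)⁻¹ * (1 + ((N:ℝ≥0∞) - 1)) := by rw [mul_add, mul_one]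
      _ = (N : ℝ≥0∞)⁻¹ * (N:ℝ≥0∞) := by rw [add_tsub_cancel_of_le h1N]
      _ = 1 := ENNReal.inv_mul_cancel (by exact_mod_cast hN.ne') (ENNReal.natCast_ne_top N)
  set γ : Measure ((EuclideanSpace ℝ (Fin n)) × (EuclideanSpace ℝ (Fin n))) :=
    ((N : ℝ≥0∞)⁻¹ - t) • Measure.dirac (R i₀, R i₀) + t • Measure.dirac (y, R i₀)
      + (N : ℝ≥0∞)⁻¹ • ∑ i ∈ Finset.univ.erase i₀, Measure.dirac (R i, R i) with hγ
  have hmapfst : γ.map Prod.fst = P := by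
    rw [hγ, hP, Measure.map_add _ _ measurable_fst, Measure.map_add _ _ measurable_fst,
      Measure.map_smul, Measure.map_smul, Measure.map_smul,
      map_finset_sum' _ _ _ measurable_fst]
    simp [Measure.map_dirac' measurable_fst]
  have hmapsnd : γ.map Prod.snd = empirical R := by
    rw [hγ, Measure.map_add _ _ measurable_snd, Measure.map_add _ _ measurable_snd,
      Measure.map_smul, Measure.map_smul, Measure.map_smul,
      map_finset_sum' _ _ _ measurable_snd]
    simp only [Measure.map_dirac' measurable_snd]
    rw [empirical, ← Finset.add_sum_erase _ _ (Finset.mem_univ i₀), smul_add, ← add_smul,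
      tsub_add_cancel_of_le htle]
  have hyR : ‖y - R i₀‖ ≤ δ / τ := by
    rw [hy, sub_sub_cancel_left, norm_neg, norm_smul, Real.norm_eq_abs, abs_of_nonneg (by positivity)]
    calc (δ/τ) * ‖u‖ ≤ (δ/τ) * 1 := mul_le_mul_of_nonneg_left hun (by positivity)
    _ = δ/τ := mul_one _
  have hcost : (∫⁻ p, ENNReal.ofReal ‖p.1 - p.2‖ ∂γ) ≤ ENNReal.ofReal δ := by
    rw [hγ, lintegral_add_measure, lintegral_add_measure, lintegral_smul_measure,
      lintegral_smul_measure, lintegral_smul_measure, lintegral_finset_sum_measure]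
    simp only [lintegral_dirac, smul_eq_mul, sub_self, norm_zero, ENNReal.ofReal_zero, mul_zero,
      Finset.sum_const_zero, zero_add, add_zero]
    calc t * ENNReal.ofReal ‖y - R i₀‖ ≤ ENNReal.ofReal τ * ENNReal.ofReal (δ/τ) := by
          rw [ht]; exact mul_le_mul_right (ENNReal.ofReal_le_ofReal hyR) _
      _ = ENNReal.ofReal (τ * (δ/τ)) := (ENNReal.ofReal_mul hτ0.le).symm
      _ = ENNReal.ofReal δ := by rw [mul_div_cancel₀ _ hτ0.ne']
  have hTC : transportCost (fun u w => ENNReal.ofReal ‖u - w‖) P (empirical R) ≤ ENNReal.ofReal δ := by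
    rw [transportCost]
    exact le_trans (iInf_le_of_le γ (le_trans (iInf_le _ hmapfst) (iInf_le _ hmapsnd))) hcost
  refine ⟨P, hprob, hTC, ?_⟩
  have hval : ∫⁻ x, ENNReal.ofReal (max (-⟪π, x⟫ - a) 0) ∂P
      = ENNReal.ofReal (((N:ℝ)⁻¹ - τ) * max (-⟪π, R i₀⟫ - a) 0 + τ * max (-⟪π, y⟫ - a) 0
          + (N:ℝ)⁻¹ * ∑ i ∈ Finset.univ.erase i₀, max (-⟪π, R i⟫ - a) 0) := by
    rw [hP, lintegral_add_measure, lintegral_add_measure, lintegral_smul_measure,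
      lintegral_smul_measure, lintegral_smul_measure, lintegral_finset_sum_measure]
    simp only [lintegral_dirac, smul_eq_mul]
    rw [hNinv, ht, ← ENNReal.ofReal_sub _ hτ0.le,
      ← ENNReal.ofReal_mul (by linarith : (0:ℝ) ≤ (N:ℝ)⁻¹ - τ),
      ← ENNReal.ofReal_mul hτ0.le,
      ← ENNReal.ofReal_sum_of_nonneg (fun i _ => le_max_right _ _),
      ← ENNReal.ofReal_mul hNpos.le,
      ← ENNReal.ofReal_add (mul_nonneg (by linarith) (le_max_right _ _)) (mul_nonneg hτ0.le (le_max_right _ _)),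
      ← ENNReal.ofReal_add (add_nonneg (mul_nonneg (by linarith) (le_max_right _ _)) (mul_nonneg hτ0.le (le_max_right _ _)))
        (mul_nonneg hNpos.le (Finset.sum_nonneg (fun i _ => le_max_right _ _)))]
  rw [hval]
  apply ENNReal.ofReal_le_ofReal
  have hinner : ⟪π, y⟫ = ⟪π, R i₀⟫ - (δ/τ) * ‖π‖ := by
    rw [hy, inner_sub_right, real_inner_smul_right, hπu]
  have hfy : (-⟪π, R i₀⟫ - a) + (δ/τ) * ‖π‖ ≤ max (-⟪π, y⟫ - a) 0 := by
    refine le_trans (le_of_eq ?_) (le_max_left _ _)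
    rw [hinner]; ring
  have hτδ : τ * ((δ/τ) * ‖π‖) = δ * ‖π‖ := by
    field_simp
  have hsum : (N:ℝ)⁻¹ * (∑ i : Fin N, max (-⟪π, R i⟫ - a) 0)
      = (N:ℝ)⁻¹ * max (-⟪π, R i₀⟫ - a) 0
        + (N:ℝ)⁻¹ * ∑ i ∈ Finset.univ.erase i₀, max (-⟪π, R i⟫ - a) 0 := by
    rw [← Finset.add_sum_erase _ (fun i => max (-⟪π, R i⟫ - a) 0) (Finset.mem_univ i₀), mul_add]
  have hτfy : τ * ((-⟪π, R i₀⟫ - a) + (δ/τ) * ‖π‖) ≤ τ * max (-⟪π, y⟫ - a) 0 :=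
    mul_le_mul_of_nonneg_left hfy hτ0.le
  have hgdef : -⟪π, R i₀⟫ - a = max (-⟪π, R i₀⟫ - a) 0 - g := by rw [hg]; ring
  nlinarith [hτfy, hτδ, hsum, hτg, hgdef]

/-- Inner worst-case expectation identity for `κ = 1` (from the proof of the RMC-1 part of
Proposition 4.1): `sup_{P : C(P,Q) ≤ δ} E_P[(−⟪π, R⟫ − a)⁺] = (1/N) ∑ᵢ (−⟪π, Rᵢ⟫ − a)⁺ + δ‖π‖₂`,
with the cost `c(u,w) = ‖u − w‖₂`. -/
theorem worst_case_positive_part_k1 (n N : ℕ) (hN : 0 < N)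
    (R : Fin N → EuclideanSpace ℝ (Fin n))
    (π : EuclideanSpace ℝ (Fin n)) (a δ : ℝ) (hδ : 0 < δ) :
    (⨆ (P : Measure (EuclideanSpace ℝ (Fin n)))
        (_ : IsProbabilityMeasure P)
        (_ : transportCost (fun u w => ENNReal.ofReal ‖u - w‖) P (empirical R)
          ≤ ENNReal.ofReal δ),
        ((∫⁻ x, ENNReal.ofReal (max (-⟪π, x⟫ - a) 0) ∂P : ℝ≥0∞) : EReal)) =
    (((N : ℝ)⁻¹ * (∑ i : Fin N, max (-⟪π, R i⟫ - a) 0) + δ * ‖π‖ : ℝ) : EReal) := by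
  set S : ℝ := (N : ℝ)⁻¹ * (∑ i : Fin N, max (-⟪π, R i⟫ - a) 0) + δ * ‖π‖ with hS
  have hS0 : 0 ≤ S := by
    rw [hS]
    have h1 : (0:ℝ) ≤ (N : ℝ)⁻¹ := by positivity
    have h2 : (0:ℝ) ≤ ∑ i : Fin N, max (-⟪π, R i⟫ - a) 0 :=
      Finset.sum_nonneg fun i _ => le_max_right _ _
    have h3 : (0:ℝ) ≤ δ * ‖π‖ := by positivity
    nlinarith
  clear_value S
  apply le_antisymm
  · apply iSup_le; intro P; apply iSup_le; intro _; apply iSup_le; intro h2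
    have h := upper' hN R π a δ hδ.le P h2
    rw [← hS] at h
    calc ((∫⁻ x, ENNReal.ofReal (max (-⟪π, x⟫ - a) 0) ∂P : ℝ≥0∞) : EReal)
        ≤ ((ENNReal.ofReal S : ℝ≥0∞) : EReal) := EReal.coe_ennreal_le_coe_ennreal_iff.mpr h
      _ = ((max S 0 : ℝ) : EReal) := EReal.coe_ennreal_ofReal
      _ = ((S : ℝ) : EReal) := by rw [max_eq_left hS0]
  · have key : ∀ ε : ℝ, 0 < ε → ((S - ε : ℝ) : EReal) ≤
        (⨆ (P : Measure (EuclideanSpace ℝ (Fin n)))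
          (_ : IsProbabilityMeasure P)
          (_ : transportCost (fun u w => ENNReal.ofReal ‖u - w‖) P (empirical R)
            ≤ ENNReal.ofReal δ),
          ((∫⁻ x, ENNReal.ofReal (max (-⟪π, x⟫ - a) 0) ∂P : ℝ≥0∞) : EReal)) := by
      intro ε hε
      obtain ⟨P, hprob, hTC, hval⟩ := lower' hN R π a δ hδ ε hε
      rw [← hS] at hval
      calc ((S - ε : ℝ) : EReal)
          ≤ ((max (S - ε) 0 : ℝ) : EReal) := EReal.coe_le_coe_iff.mpr (le_max_left _ _)
        _ = ((ENNReal.ofReal (S - ε) : ℝ≥0∞) : EReal) := EReal.coe_ennreal_ofReal.symm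
        _ ≤ ((∫⁻ x, ENNReal.ofReal (max (-⟪π, x⟫ - a) 0) ∂P : ℝ≥0∞) : EReal) :=
            EReal.coe_ennreal_le_coe_ennreal_iff.mpr hval
        _ ≤ ⨆ (_ : transportCost (fun u w => ENNReal.ofReal ‖u - w‖) P (empirical R)
              ≤ ENNReal.ofReal δ),
              ((∫⁻ x, ENNReal.ofReal (max (-⟪π, x⟫ - a) 0) ∂P : ℝ≥0∞) : EReal) := le_iSup (fun _ : transportCost (fun u w => ENNReal.ofReal ‖u - w‖) P (empirical R)
                ≤ ENNReal.ofReal δ =>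
              ((∫⁻ x, ENNReal.ofReal (max (-⟪π, x⟫ - a) 0) ∂P : ℝ≥0∞) : EReal)) hTC
        _ ≤ ⨆ (_ : IsProbabilityMeasure P)
              (_ : transportCost (fun u w => ENNReal.ofReal ‖u - w‖) P (empirical R)
                ≤ ENNReal.ofReal δ),
              ((∫⁻ x, ENNReal.ofReal (max (-⟪π, x⟫ - a) 0) ∂P : ℝ≥0∞) : EReal) := le_iSup (fun _ : IsProbabilityMeasure P =>
              ⨆ (_ : transportCost (fun u w => ENNReal.ofReal ‖u - w‖) P (empirical R)
                ≤ ENNReal.ofReal δ),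
              ((∫⁻ x, ENNReal.ofReal (max (-⟪π, x⟫ - a) 0) ∂P : ℝ≥0∞) : EReal)) hprob
        _ ≤ _ := le_iSup (fun P : Measure (EuclideanSpace ℝ (Fin n)) =>
              ⨆ (_ : IsProbabilityMeasure P)
                (_ : transportCost (fun u w => ENNReal.ofReal ‖u - w‖) P (empirical R)
                  ≤ ENNReal.ofReal δ),
                ((∫⁻ x, ENNReal.ofReal (max (-⟪π, x⟫ - a) 0) ∂P : ℝ≥0∞) : EReal)) P
    refine le_of_forall_lt fun c hc => ?_
    induction c using EReal.rec with
    | bot => exact lt_of_lt_of_le (EReal.bot_lt_coe (S - 1)) (key 1 one_pos)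
    | coe r =>
      have hr : r < S := EReal.coe_lt_coe_iff.mp hc
      exact lt_of_lt_of_le (EReal.coe_lt_coe_iff.mpr (by linarith : r < S - (S - r)/2))
        (key ((S - r)/2) (by linarith))
    | top => exact absurd hc not_top_lt
end
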